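/- Reduction to scale-1 hypothesis: Let (X,d,μ) be a complete geodesic metric measure space with μ doubling, let ξ be a doubling gauge function with doubling constant D, and let Ĉ > 1. Suppose Ω ⊂ X is a domain such that for all x ∈ Ω, H^ξ_{d(x,∂Ω)}(B(x, Ĉ d(x,∂Ω)) \ Ω) ≥ δ ξ(B(x, d(x,∂Ω))). Then there exist constants C' (depending on Ĉ and D) such that for all x₀ ∈ Ω, H^ξ_{d(x₀,∂Ω)}(B(x₀, 2 d(x₀,∂Ω)) \ Ω) ≥ C'⁻¹ δ ξ(B(x₀, d(x₀,∂Ω))). -/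

import Mathlib

open Metric Set MeasureTheory ENNReal

noncomputable section

namespace Paper

variable {X : Type*}

/-- The subcollection of balls (center, radius pairs) whose ball meets `A`. -/
def restr [MetricSpace X] (C : Set (X × ℝ)) (A : Set X) : Set (X × ℝ) :=
  {B ∈ C | (Metric.ball B.1 B.2 ∩ A).Nonempty}

/-- Total gauge mass of a collection of balls. -/
def gaugeSum (ξ : X → ℝ → ℝ≥0∞) (C : Set (X × ℝ)) : ℝ≥0∞ :=
  ∑' B : C, ξ (B : X × ℝ).1 (B : X × ℝ).2

/-- Hausdorff content at scale `r` with respect to a gauge `ξ`. -/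
def gaugeContent [MetricSpace X] (ξ : X → ℝ → ℝ≥0∞) (r : ℝ) (A : Set X) : ℝ≥0∞ :=
  ⨅ (C : Set (X × ℝ)) (_ : C.Countable) (_ : ∀ B ∈ C, 0 < B.2 ∧ B.2 ≤ r)
    (_ : A ⊆ ⋃ B ∈ C, Metric.ball B.1 B.2), gaugeSum ξ C

/-- A doubling gauge function with constant `D`. -/
def DoublingGauge [MetricSpace X] (ξ : X → ℝ → ℝ≥0∞) (D : ℝ≥0∞) : Prop :=
  (∀ (x : X) (r : ℝ), 0 < r → 0 < ξ x r ∧ ξ x r < ⊤) ∧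
  ∀ (x x' : X) (r r' : ℝ), 0 < r' → r' ≤ r → r ≤ 2 * r' →
    (Metric.ball x' r' ∩ Metric.ball x r).Nonempty →
    ξ x' r' ≤ D * ξ x r ∧ ξ x r ≤ D * ξ x' r'

/-- `X` is metrically `N`-doubling: every ball of radius `r` contains at most `N`
pairwise `r/2`-separated points. -/
def MetricDoubling (X : Type*) [MetricSpace X] (N : ℕ) : Prop :=
  ∀ (x : X) (r : ℝ) (S : Finset X), (↑S ⊆ Metric.ball x r) →
    (∀ y ∈ S, ∀ z ∈ S, y ≠ z → r / 2 ≤ dist y z) → S.card ≤ N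

/-- `μ` is a doubling measure with constant `D`. -/
def DoublingMeasure [MetricSpace X] [MeasurableSpace X] (μ : Measure X) (D : ℝ≥0∞) : Prop :=
  ∀ (x : X) (r : ℝ), 0 < r →
    0 < μ (Metric.ball x r) ∧ μ (Metric.ball x r) < ⊤ ∧
    μ (Metric.ball x (2 * r)) ≤ D * μ (Metric.ball x r)

/-- The codimension-`q` gauge `h_q(B) = μ(B)/rad(B)^q`. -/
def hGauge [MetricSpace X] [MeasurableSpace X] (μ : Measure X) (q : ℝ) (x : X) (r : ℝ) : ℝ≥0∞ :=
  μ (Metric.ball x r) / ENNReal.ofReal (r ^ q)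

/-- Total `h_q` mass of a collection of balls. -/
def hSum [MetricSpace X] [MeasurableSpace X] (μ : Measure X) (q : ℝ) (C : Set (X × ℝ)) : ℝ≥0∞ :=
  ∑' B : C, hGauge μ q (B : X × ℝ).1 (B : X × ℝ).2

/-- `ξ` has codimension at least `Q` (with constant `K`). -/
def HasCodimAtLeast [MetricSpace X] [MeasurableSpace X] (ξ : X → ℝ → ℝ≥0∞)
    (μ : Measure X) (Q : ℝ) (K : ℝ≥0∞) : Prop :=
  ∀ (x : X) (r R : ℝ), 0 < r → r ≤ R →
    ξ x R / ξ x r ≤ K * (hGauge μ Q x R / hGauge μ Q x r)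

/-- `X` is a geodesic space: any two points are joined by a curve of length `dist x y`. -/
def GeodesicSpace (X : Type*) [MetricSpace X] : Prop :=
  ∀ x y : X, ∃ γ : ℝ → X, γ 0 = x ∧ γ 1 = y ∧ ContinuousOn γ (Set.Icc 0 1) ∧
    eVariationOn γ (Set.Icc 0 1) = ENNReal.ofReal (dist x y)

/-- A `c`-John curve on the parameter interval `[a, b]`: every tail subcurve from `γ t`
has length at most `c · d(γ t, ∂Ω)`. -/
def IsJohnCurve [MetricSpace X] (Ω : Set X) (c : ℝ) (γ : ℝ → X) (a b : ℝ) : Prop :=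
  ContinuousOn γ (Set.Icc a b) ∧ eVariationOn γ (Set.Icc a b) < ⊤ ∧
  ∀ t ∈ Set.Icc a b, eVariationOn γ (Set.Icc t b) ≤
    ENNReal.ofReal (c * Metric.infDist (γ t) (frontier Ω))

/-- The `c`-accessible boundary of `Ω` from `x₀`. -/
def accBoundary [MetricSpace X] (Ω : Set X) (x₀ : X) (c : ℝ) : Set X :=
  {w ∈ frontier Ω | ∃ γ : ℝ → X, γ 0 = x₀ ∧ γ 1 = w ∧ IsJohnCurve Ω c γ 0 1}

/-- `g = sup_{B ∈ ℬ} (1/rad B) · 1_{2B}`. -/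
def ballSup [MetricSpace X] (ℬ : Set (X × ℝ)) : X → ℝ≥0∞ :=
  fun w => ⨆ (B : ℬ) (_ : w ∈ Metric.ball (B : X × ℝ).1 (2 * (B : X × ℝ).2)),
    (ENNReal.ofReal (B : X × ℝ).2)⁻¹

/-- The restricted (uncentered) maximal function at scale `s`. -/
def restrMax [MetricSpace X] [MeasurableSpace X] (μ : Measure X) (g : X → ℝ≥0∞)
    (s : ℝ) (x : X) : ℝ≥0∞ :=
  ⨆ (z : X) (ρ : ℝ) (_ : 0 < ρ) (_ : ρ < s) (_ : x ∈ Metric.ball z ρ),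
    (∫⁻ w in Metric.ball z ρ, g w ∂μ) / μ (Metric.ball z ρ)

/-- `g` is an upper gradient of `f`: the upper gradient inequality holds along all
unit-speed (1-Lipschitz) curves. -/
def IsUpperGradient [MetricSpace X] (f : X → ℝ) (g : X → ℝ≥0∞) : Prop :=
  ∀ (L : ℝ) (γ : ℝ → X), 0 ≤ L → LipschitzOnWith 1 γ (Set.Icc 0 L) →
    ENNReal.ofReal |f (γ L) - f (γ 0)| ≤ ∫⁻ t in Set.Icc 0 L, g (γ t)

/-- The `p`-Poincaré inequality with constants `CP, lam`. -/
def PoincareIneq [MetricSpace X] [MeasurableSpace X] (μ : Measure X)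
    (p CP lam : ℝ) : Prop :=
  ∀ (f : X → ℝ) (g : X → ℝ≥0∞), MeasureTheory.LocallyIntegrable f μ → Measurable g →
    IsUpperGradient f g →
    ∀ (x : X) (r : ℝ), 0 < r →
      ⨍ y in Metric.ball x r, |f y - ⨍ w in Metric.ball x r, f w ∂μ| ∂μ ≤
        CP * r * (((∫⁻ w in Metric.ball x (lam * r), g w ^ p ∂μ) /
          μ (Metric.ball x (lam * r))).toReal) ^ (1 / p)

/-- The pointwise `p`-Poincaré inequality with constants `(CP, L, lam)`. -/
def PointwisePoincare [MetricSpace X] [MeasurableSpace X] (μ : Measure X)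
    (p CP L lam : ℝ) : Prop :=
  ∀ (x y : X) (g : X → ℝ≥0∞), Measurable g →
    (⨅ (ℓ : ℝ) (γ : ℝ → X) (_ : 0 ≤ ℓ) (_ : ℓ ≤ L * dist x y)
        (_ : LipschitzOnWith 1 γ (Set.Icc 0 ℓ)) (_ : γ 0 = x) (_ : γ ℓ = y)
        (_ : ∀ t ∈ Set.Icc 0 ℓ, γ t ∈ Metric.ball x (2 * lam * dist x y)),
        ∫⁻ t in Set.Icc 0 ℓ, g (γ t)) ≤
      ENNReal.ofReal (CP * dist x y) *
        (restrMax μ (fun w => g w ^ p) (lam * dist x y) x +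
         restrMax μ (fun w => g w ^ p) (lam * dist x y) y) ^ (1 / p)

/-- The `s`-dimensional Hausdorff content (at scale `∞`). -/
def sContent {Y : Type*} [MetricSpace Y] (s : ℝ) (A : Set Y) : ℝ≥0∞ :=
  ⨅ (t : ℕ → Set Y) (_ : A ⊆ ⋃ n, t n), ∑' n, EMetric.diam (t n) ^ s

end Paper
namespace Paper

/-- Concentric doubling chain: `ξ b (2^j r) ≤ D^j ξ b r`. -/
lemma gauge_pow {X : Type*} [MetricSpace X] {ξ : X → ℝ → ℝ≥0∞} {D : ℝ≥0∞}
    (hξ : Paper.DoublingGauge ξ D) (b : X) {r : ℝ} (hr : 0 < r) :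
    ∀ j : ℕ, ξ b (2 ^ j * r) ≤ D ^ j * ξ b r := by
  intro j
  induction j with
  | zero => simp
  | succ j ih =>
    have h2 : (0:ℝ) < 2 ^ j * r := by positivity
    have heq : (2:ℝ) ^ (j+1) * r = 2 * (2 ^ j * r) := by ring
    have hstep := (hξ.2 b b (2 ^ (j+1) * r) (2 ^ j * r) h2 (by linarith) (le_of_eq heq)
      ⟨b, Metric.mem_ball_self h2, Metric.mem_ball_self (by linarith)⟩).2
    calc ξ b (2 ^ (j+1) * r) ≤ D * ξ b (2 ^ j * r) := hstep
      _ ≤ D * (D ^ j * ξ b r) := mul_le_mul_right ih _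
      _ = D ^ (j+1) * ξ b r := by ring

/-- Cross chain: if the small ball `B(b,r)` meets `B(a,R)` and `r ≤ R ≤ 2^n r`,
then `ξ a R ≤ D^(n+1) ξ b r`. -/
lemma gauge_chain {X : Type*} [MetricSpace X] {ξ : X → ℝ → ℝ≥0∞} {D : ℝ≥0∞}
    (hD : 1 ≤ D) (hξ : Paper.DoublingGauge ξ D) (a b : X) {R r : ℝ} (n : ℕ)
    (hr : 0 < r) (hrR : r ≤ R) (hRn : R ≤ 2 ^ n * r)
    (hint : (Metric.ball b r ∩ Metric.ball a R).Nonempty) :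
    ξ a R ≤ D ^ (n + 1) * ξ b r := by
  induction n with
  | zero =>
    have hRr : R ≤ r := by simpa using hRn
    have hrR' : r = R := le_antisymm hrR hRr
    subst hrR'
    have := (hξ.2 b a r r hr le_rfl (by linarith) (by rwa [Set.inter_comm] at hint)).1
    simpa using this
  | succ n ih =>
    by_cases hc : R ≤ 2 ^ n * r
    · exact (ih hc).trans (mul_le_mul_left (pow_le_pow_right' hD (Nat.le_succ _)) _)
    · push_neg at hc
      have h2 : (0:ℝ) < 2 ^ n * r := by positivity
      have h1n : (1:ℝ) ≤ 2 ^ n := one_le_pow₀ one_le_two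
      have heq : (2:ℝ) ^ (n+1) * r = 2 * (2 ^ n * r) := by ring
      obtain ⟨p, hpb, hpa⟩ := hint
      have hpb' : p ∈ Metric.ball b (2 ^ n * r) :=
        Metric.mem_ball.mpr ((Metric.mem_ball.mp hpb).trans_le (by nlinarith))
      have hstep := (hξ.2 a b R (2 ^ n * r) h2 hc.le (by linarith) ⟨p, hpb', hpa⟩).2
      calc ξ a R ≤ D * ξ b (2 ^ n * r) := hstep
        _ ≤ D * (D ^ n * ξ b r) := mul_le_mul_right (gauge_pow hξ b hr n) _
        _ = D ^ (n + 1) * ξ b r := by ring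
        _ ≤ D ^ (n + 1 + 1) * ξ b r :=
            mul_le_mul_left (pow_le_pow_right' hD (Nat.le_succ _)) _

lemma gaugeSum_mono {X : Type*} [MetricSpace X] (ξ : X → ℝ → ℝ≥0∞)
    {C₁ C₂ : Set (X × ℝ)} (h : C₁ ⊆ C₂) :
    Paper.gaugeSum ξ C₁ ≤ Paper.gaugeSum ξ C₂ := by
  unfold Paper.gaugeSum
  rw [tsum_subtype C₁ (fun B => ξ B.1 B.2), tsum_subtype C₂ (fun B => ξ B.1 B.2)]
  exact ENNReal.tsum_le_tsum
    (Set.indicator_le_indicator_of_subset h (fun _ => zero_le))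

lemma arith_aux (E a b δ : ℝ≥0∞) (hE0 : E ≠ 0) (hEt : E ≠ ⊤) (h : a ≤ E * b) :
    E⁻¹ * δ * a ≤ δ * b := by
  calc E⁻¹ * δ * a ≤ E⁻¹ * δ * (E * b) := mul_le_mul_right h _
    _ = (E⁻¹ * E) * (δ * b) := by ring
    _ = δ * b := by rw [ENNReal.inv_mul_cancel hE0 hEt, one_mul]

end Paper
theorem reduction_to_scale_two {X : Type*} [MetricSpace X] [CompleteSpace X]
    [MeasurableSpace X] (hgeo : Paper.GeodesicSpace X) (μ : Measure X)
    (D : ℝ≥0∞) (hD : 1 ≤ D) (hDt : D < ⊤) (hμ : Paper.DoublingMeasure μ D)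
    (ξ : X → ℝ → ℝ≥0∞) (hξ : Paper.DoublingGauge ξ D)
    (Chat : ℝ) (hChat : 1 < Chat) :
    ∃ C' : ℝ≥0∞, 1 ≤ C' ∧ C' < ⊤ ∧
      ∀ (Ω : Set X), IsOpen Ω → IsConnected Ω →
        ∀ δ : ℝ≥0∞, 0 < δ → δ ≤ 1 →
        (∀ x ∈ Ω, δ * ξ x (Metric.infDist x (frontier Ω)) ≤
          Paper.gaugeContent ξ (Metric.infDist x (frontier Ω))
            (Metric.ball x (Chat * Metric.infDist x (frontier Ω)) \ Ω)) →
        ∀ x₀ ∈ Ω, C'⁻¹ * δ * ξ x₀ (Metric.infDist x₀ (frontier Ω)) ≤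
          Paper.gaugeContent ξ (Metric.infDist x₀ (frontier Ω))
            (Metric.ball x₀ (2 * Metric.infDist x₀ (frontier Ω)) \ Ω) := by
  obtain ⟨k, hk⟩ : ∃ k : ℕ, Chat ≤ 2 ^ k := by
    obtain ⟨k, hk⟩ := pow_unbounded_of_one_lt Chat one_lt_two
    exact ⟨k, hk.le⟩
  have hD0 : D ≠ 0 := (zero_lt_one.trans_le hD).ne'
  set E : ℝ≥0∞ := D ^ (k + 4) with hE
  have hE0 : E ≠ 0 := pow_ne_zero _ hD0
  have hEt : E ≠ ⊤ := ENNReal.pow_ne_top hDt.ne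
  have hE1 : 1 ≤ E := by
    calc (1:ℝ≥0∞) = D ^ 0 := (pow_zero D).symm
      _ ≤ E := pow_le_pow_right' hD (Nat.zero_le _)
  refine ⟨E, hE1, ENNReal.pow_lt_top hDt, ?_⟩
  intro Ω hΩopen _hΩconn δ hδ0 hδ1 hyp x₀ hx₀
  set F := frontier Ω with hF
  set d₀ := Metric.infDist x₀ F with hd₀
  by_cases hFne : F.Nonempty
  swap
  · -- frontier empty : d₀ = 0 and both sides coincide
    have hd0 : d₀ = 0 := by
      rw [hd₀, Set.not_nonempty_iff_eq_empty.mp hFne, Metric.infDist_empty]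
    have h := hyp x₀ hx₀
    rw [← hd₀] at h
    rw [hd0, mul_zero] at h
    rw [hd0, mul_zero]
    refine le_trans ?_ h
    calc E⁻¹ * δ * ξ x₀ 0 ≤ 1 * δ * ξ x₀ 0 := by
          exact mul_le_mul_left (mul_le_mul_left (ENNReal.inv_le_one.mpr hE1) δ) _
      _ = δ * ξ x₀ 0 := by rw [one_mul]
  · have hd₀pos : 0 < d₀ := by
      rcases lt_or_eq_of_le (Metric.infDist_nonneg (x := x₀) (s := F)) with h | h
      · exact h
      · exfalso
        have hx₀F : x₀ ∈ F :=
          (IsClosed.mem_iff_infDist_zero isClosed_frontier hFne).mpr h.symm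
        rw [hF, hΩopen.frontier_eq] at hx₀F
        exact hx₀F.2 hx₀
    have hChat0 : (0:ℝ) < Chat := lt_trans zero_lt_one hChat
    set s := d₀ / Chat with hs
    have hs_pos : 0 < s := div_pos hd₀pos hChat0
    have hs_lt : s < d₀ := div_lt_self hd₀pos hChat
    have hCs : Chat * s = d₀ := by rw [hs]; field_simp
    obtain ⟨w, hwF, hw⟩ := (Metric.infDist_lt_iff hFne).mp
      (show Metric.infDist x₀ F < d₀ + s / 2 by rw [← hd₀]; linarith)
    obtain ⟨γ, hγ0, hγ1, hγc, hγvar⟩ := hgeo x₀ w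
    set f : ℝ → ℝ := fun t => Metric.infDist (γ t) F with hf
    have hfc : ContinuousOn f (Set.Icc 0 1) :=
      (Metric.continuous_infDist_pt F).comp_continuousOn hγc
    have hf0 : f 0 = d₀ := by rw [hf]; simp only; rw [hγ0, hd₀]
    have hf1 : f 1 = 0 := by rw [hf]; simp only; rw [hγ1]; exact Metric.infDist_zero_of_mem hwF
    set T := {t ∈ Set.Icc (0:ℝ) 1 | f t = s} with hT
    have hTclosed : IsClosed T :=
      hfc.preimage_isClosed_of_isClosed isClosed_Icc isClosed_singleton
    have hTne : T.Nonempty := by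
      have hmem : s ∈ Set.Icc (f 1) (f 0) := by rw [hf0, hf1]; exact ⟨hs_pos.le, hs_lt.le⟩
      obtain ⟨t, ht, hft⟩ := intermediate_value_Icc' zero_le_one hfc hmem
      exact ⟨t, ht, hft⟩
    have hTbdd : BddBelow T := ⟨0, fun t ht => ht.1.1⟩
    set t₀ := sInf T with ht₀
    have ht₀T : t₀ ∈ T := hTclosed.csInf_mem hTne hTbdd
    obtain ⟨ht₀mem, hft₀⟩ := ht₀T
    have hbefore : ∀ u ∈ Set.Icc 0 t₀, s ≤ f u := by
      intro u hu
      by_contra hcon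
      push_neg at hcon
      have husub : Set.Icc (0:ℝ) u ⊆ Set.Icc 0 1 :=
        Set.Icc_subset_Icc le_rfl (hu.2.trans ht₀mem.2)
      have hmem : s ∈ Set.Icc (f u) (f 0) := by rw [hf0]; exact ⟨hcon.le, hs_lt.le⟩
      obtain ⟨v, hv, hfv⟩ := intermediate_value_Icc' hu.1 (hfc.mono husub) hmem
      have hvT : v ∈ T := ⟨⟨hv.1, hv.2.trans (hu.2.trans ht₀mem.2)⟩, hfv⟩
      have h1 : t₀ ≤ u := (csInf_le hTbdd hvT).trans hv.2
      have hut : u = t₀ := le_antisymm hu.2 h1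
      rw [hut, hft₀] at hcon
      exact lt_irrefl s hcon
    set x := γ t₀ with hx
    have hsubΩ : γ '' Set.Icc 0 t₀ ⊆ Ω := by
      have hpre : IsPreconnected (γ '' Set.Icc 0 t₀) :=
        (isPreconnected_Icc).image γ
          (hγc.mono (Set.Icc_subset_Icc le_rfl ht₀mem.2))
      refine IsPreconnected.subset_left_of_subset_union (v := (closure Ω)ᶜ) hΩopen
        (isOpen_compl_iff.mpr isClosed_closure) ?_ ?_ ?_ hpre
      · exact Disjoint.mono_left subset_closure disjoint_compl_right
      · rintro _ ⟨u, hu, rfl⟩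
        have hnF : γ u ∉ F := by
          intro hmem
          have h0 : Metric.infDist (γ u) F = 0 := Metric.infDist_zero_of_mem hmem
          have h1 : s ≤ f u := hbefore u hu
          rw [hf] at h1
          simp only at h1
          rw [h0] at h1
          linarith
        by_cases hγuΩ : γ u ∈ Ω
        · exact Or.inl hγuΩ
        · refine Or.inr fun hcl => hnF ?_
          rw [hF, hΩopen.frontier_eq]
          exact ⟨hcl, hγuΩ⟩
      · exact ⟨x₀, ⟨0, ⟨le_rfl, ht₀mem.1⟩, hγ0⟩, hx₀⟩
    have hxΩ : x ∈ Ω := hsubΩ ⟨t₀, ⟨ht₀mem.1, le_rfl⟩, rfl⟩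
    have hxs : Metric.infDist x F = s := hft₀
    have hdistsum : dist x₀ x + dist x w ≤ dist x₀ w := by
      have e1 : edist (γ 0) (γ t₀) ≤ eVariationOn γ (Set.Icc 0 1 ∩ Set.Icc 0 t₀) :=
        eVariationOn.edist_le γ ⟨⟨le_rfl, zero_le_one⟩, ⟨le_rfl, ht₀mem.1⟩⟩
          ⟨ht₀mem, ⟨ht₀mem.1, le_rfl⟩⟩
      have e2 : edist (γ t₀) (γ 1) ≤ eVariationOn γ (Set.Icc 0 1 ∩ Set.Icc t₀ 1) :=
        eVariationOn.edist_le γ ⟨ht₀mem, ⟨le_rfl, ht₀mem.2⟩⟩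
          ⟨⟨zero_le_one, le_rfl⟩, ⟨ht₀mem.2, le_rfl⟩⟩
      have hadd := eVariationOn.Icc_add_Icc γ (a := 0) (b := t₀) (c := 1)
        ht₀mem.1 ht₀mem.2 ht₀mem
      have hsum : edist (γ 0) (γ t₀) + edist (γ t₀) (γ 1) ≤ ENNReal.ofReal (dist x₀ w) := by
        calc edist (γ 0) (γ t₀) + edist (γ t₀) (γ 1)
            ≤ eVariationOn γ (Set.Icc 0 1 ∩ Set.Icc 0 t₀) +
              eVariationOn γ (Set.Icc 0 1 ∩ Set.Icc t₀ 1) := add_le_add e1 e2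
          _ = eVariationOn γ (Set.Icc 0 1 ∩ Set.Icc 0 1) := hadd
          _ = ENNReal.ofReal (dist x₀ w) := by rw [Set.inter_self]; exact hγvar
      rw [hγ0, hγ1, ← hx] at hsum
      rw [edist_dist, edist_dist, ← ENNReal.ofReal_add dist_nonneg dist_nonneg] at hsum
      exact (ENNReal.ofReal_le_ofReal_iff dist_nonneg).mp hsum
    have hxw : s ≤ dist x w := by
      rw [← hxs]; exact Metric.infDist_le_dist_of_mem hwF
    have hx₀x : dist x₀ x < d₀ := by linarith
    have hball : Metric.ball x d₀ ⊆ Metric.ball x₀ (2 * d₀) := by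
      intro p hp
      rw [Metric.mem_ball] at hp ⊢
      have htr := dist_triangle p x x₀
      rw [dist_comm x x₀] at htr
      linarith
    have hypx : δ * ξ x s ≤ Paper.gaugeContent ξ s (Metric.ball x d₀ \ Ω) := by
      have h := hyp x hxΩ
      rw [hxs, hCs] at h
      exact h
    have h2ks : d₀ ≤ 2 ^ k * s := by
      calc d₀ = Chat * s := hCs.symm
        _ ≤ 2 ^ k * s := mul_le_mul_of_nonneg_right hk hs_pos.le
    have chain1 : ξ x₀ d₀ ≤ E * ξ x s := by
      have hint1 : (Metric.ball x s ∩ Metric.ball x₀ d₀).Nonempty :=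
        ⟨x, Metric.mem_ball_self hs_pos, Metric.mem_ball.mpr (by rw [dist_comm]; exact hx₀x)⟩
      have hc1 := Paper.gauge_chain (R := d₀) (r := s) hD hξ x₀ x k hs_pos hs_lt.le h2ks hint1
      exact hc1.trans (mul_le_mul_left (pow_le_pow_right' hD (by omega)) _)
    rw [Paper.gaugeContent]
    refine le_iInf fun C => le_iInf fun hCc => le_iInf fun hCr => le_iInf fun hCcov => ?_
    set K' := Metric.ball x d₀ \ Ω with hK'
    set C₁ := Paper.restr C K' with hC₁
    have hC₁sub : C₁ ⊆ C := fun B hB => hB.1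
    have hsum₁ : Paper.gaugeSum ξ C₁ ≤ Paper.gaugeSum ξ C := Paper.gaugeSum_mono ξ hC₁sub
    by_cases hall : ∀ B ∈ C₁, B.2 ≤ s
    · have hcov' : K' ⊆ ⋃ B ∈ C₁, Metric.ball B.1 B.2 := by
        intro p hp
        have hpK : p ∈ Metric.ball x₀ (2 * d₀) \ Ω := ⟨hball hp.1, hp.2⟩
        obtain ⟨B, hBC, hpB⟩ := Set.mem_iUnion₂.mp (hCcov hpK)
        exact Set.mem_iUnion₂.mpr ⟨B, ⟨hBC, ⟨p, hpB, hp⟩⟩, hpB⟩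
      have hadm : Paper.gaugeContent ξ s K' ≤ Paper.gaugeSum ξ C₁ := by
        rw [Paper.gaugeContent]
        refine iInf_le_of_le C₁ (iInf_le_of_le (hCc.mono hC₁sub) ?_)
        refine iInf_le_of_le (fun B hB => ⟨(hCr B (hC₁sub hB)).1, hall B hB⟩) ?_
        exact iInf_le _ hcov'
      calc E⁻¹ * δ * ξ x₀ d₀ ≤ δ * ξ x s := Paper.arith_aux E _ _ δ hE0 hEt chain1
        _ ≤ Paper.gaugeContent ξ s K' := hypx
        _ ≤ Paper.gaugeSum ξ C₁ := hadm
        _ ≤ Paper.gaugeSum ξ C := hsum₁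
    · push_neg at hall
      obtain ⟨B, hBC₁, hBs⟩ := hall
      obtain ⟨hBC, p, hpB, hpK'⟩ := hBC₁
      have hrB := hCr B hBC
      have hp2d : dist p x₀ < 2 * d₀ := by
        have h1 : dist p x < d₀ := Metric.mem_ball.mp hpK'.1
        have htr := dist_triangle p x x₀
        rw [dist_comm x x₀] at htr
        linarith
      have chain2 : ξ x₀ d₀ ≤ E * ξ B.1 B.2 := by
        have c0 : ξ x₀ d₀ ≤ D * ξ x₀ (2 * d₀) :=
          (hξ.2 x₀ x₀ (2 * d₀) d₀ hd₀pos (by linarith) (by linarith)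
            ⟨x₀, Metric.mem_ball_self hd₀pos, Metric.mem_ball_self (by linarith)⟩).1
        have hRn : 2 * d₀ ≤ 2 ^ (k + 2) * B.2 := by
          have h4 : (2:ℝ) ^ (k + 2) = 4 * 2 ^ k := by ring
          nlinarith [h2ks, hs_pos, hBs, pow_pos (zero_lt_two (α := ℝ)) k]
        have hint2 : (Metric.ball B.1 B.2 ∩ Metric.ball x₀ (2 * d₀)).Nonempty :=
          ⟨p, hpB, Metric.mem_ball.mpr hp2d⟩
        have c1 := Paper.gauge_chain (R := 2 * d₀) (r := B.2) hD hξ x₀ B.1 (k + 2) hrB.1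
          (hrB.2.trans (by linarith)) hRn hint2
        calc ξ x₀ d₀ ≤ D * ξ x₀ (2 * d₀) := c0
          _ ≤ D * (D ^ (k + 3) * ξ B.1 B.2) := mul_le_mul_right c1 _
          _ = E * ξ B.1 B.2 := by rw [hE]; ring
      have hterm : ξ B.1 B.2 ≤ Paper.gaugeSum ξ C := by
        have h := ENNReal.le_tsum (f := fun B : C => ξ (B : X × ℝ).1 (B : X × ℝ).2)
          (⟨B, hBC⟩ : C)
        simpa [Paper.gaugeSum] using h
      calc E⁻¹ * δ * ξ x₀ d₀ ≤ δ * ξ B.1 B.2 := Paper.arith_aux E _ _ δ hE0 hEt chain2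
        _ ≤ 1 * ξ B.1 B.2 := mul_le_mul_left hδ1 _
        _ = ξ B.1 B.2 := one_mul _
        _ ≤ Paper.gaugeSum ξ C := hterm
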